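/- arXiv:2512.11294 — 2 statements merged into one kernel-verified Lean document; each statement's English description precedes it below -/
import Mathlib

section
/- Let p ≥ 2, q > p, a₀ > 0, c_a ≥ 1, λ ≥ 1, and Λ = λ^p + a₀·λ^q. Let D be a set and a : D → ℝ satisfy a₀/(2c_a) < a(z) < 2c_a·a₀ for all z ∈ D. Suppose f, g : D → [0,∞) are integrable on a finite measure space (D,μ), with (1/μ(D))∫_D (f^p + g^p + a·(f^q+g^q)) dμ < Λ. Then (1/μ(D))∫_D (f^p + g^p) dμ ≤ (1 + 2^{1+q/p}·c_a)^{p/q} · λ^p. -/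
open MeasureTheory

/-- Abstract form of the `q_trick`: under comparability of the coefficient `a` with `a₀`
and the bound of the total double-phase average by `Λ = λ^p + a₀ λ^q`, the `p`-part of
the average is at most `(1 + 2^{1+q/p} c_a)^{p/q} λ^p`. -/
theorem stmt2 {D : Type*} [MeasurableSpace D] (μ : Measure D) [IsFiniteMeasure μ]
    (hμ : μ Set.univ ≠ 0)
    (p q a₀ c_a lam : ℝ) (hp : 2 ≤ p) (hq : p < q) (ha₀ : 0 < a₀) (hca : 1 ≤ c_a)
    (hlam : 1 ≤ lam)
    (a f g : D → ℝ)
    (hf0 : ∀ z, 0 ≤ f z) (hg0 : ∀ z, 0 ≤ g z)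
    (hcomp : ∀ z, a₀ / (2 * c_a) < a z ∧ a z < 2 * c_a * a₀)
    (hint1 : Integrable (fun z => f z ^ p + g z ^ p) μ)
    (hint2 : Integrable (fun z => a z * (f z ^ q + g z ^ q)) μ)
    (hbound : (∫ z, (f z ^ p + g z ^ p + a z * (f z ^ q + g z ^ q)) ∂μ)
        / (μ Set.univ).toReal < lam ^ p + a₀ * lam ^ q) :
    (∫ z, (f z ^ p + g z ^ p) ∂μ) / (μ Set.univ).toReal
      ≤ (1 + 2 ^ (1 + q / p) * c_a) ^ (p / q) * lam ^ p := by
  haveI : NeZero μ := ⟨fun h => hμ (by simp [h])⟩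
  have hM0 : 0 < (μ Set.univ).toReal := ENNReal.toReal_pos hμ (measure_ne_top μ _)
  have hp0 : (0:ℝ) < p := by linarith
  have hq0 : (0:ℝ) < q := by linarith
  have hca0 : (0:ℝ) < c_a := by linarith
  have hlam0 : (0:ℝ) < lam := by linarith
  set s : ℝ := p / q with hsdef
  set r : ℝ := q / p with hrdef
  have hs0 : 0 < s := div_pos hp0 hq0
  have hs1 : s < 1 := by rw [hsdef, div_lt_one hq0]; exact hq
  have hr0 : 0 < r := div_pos hq0 hp0
  have hsr : s * r = 1 := by rw [hsdef, hrdef]; field_simp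
  have hqs : q * s = p := by rw [hsdef]; field_simp
  have hpr : p * r = q := by rw [hrdef]; field_simp
  set C : ℝ := 2 * c_a / a₀ with hCdef
  have hC0 : 0 < C := by positivity
  have ha : ∀ z, 0 < a z := fun z => lt_trans (by positivity) (hcomp z).1
  have hh0 : ∀ z, 0 ≤ f z ^ q + g z ^ q := fun z =>
    add_nonneg (Real.rpow_nonneg (hf0 z) q) (Real.rpow_nonneg (hg0 z) q)
  have hψ0 : ∀ z, 0 ≤ a z * (f z ^ q + g z ^ q) := fun z => mul_nonneg (ha z).le (hh0 z)
  have hCψ : ∀ z, f z ^ q + g z ^ q ≤ C * (a z * (f z ^ q + g z ^ q)) := by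
    intro z
    have h1 : a₀ / (2 * c_a) * (f z ^ q + g z ^ q) ≤ a z * (f z ^ q + g z ^ q) :=
      mul_le_mul_of_nonneg_right (hcomp z).1.le (hh0 z)
    have h2 : C * (a₀ / (2 * c_a)) = 1 := by rw [hCdef]; field_simp
    calc f z ^ q + g z ^ q = C * (a₀ / (2 * c_a)) * (f z ^ q + g z ^ q) := by rw [h2, one_mul]
      _ = C * (a₀ / (2 * c_a) * (f z ^ q + g z ^ q)) := by ring
      _ ≤ C * (a z * (f z ^ q + g z ^ q)) := mul_le_mul_of_nonneg_left h1 hC0.le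
  -- pointwise bound
  have hpoint : ∀ z, f z ^ p + g z ^ p ≤ 2 * C ^ s * (a z * (f z ^ q + g z ^ q)) ^ s := by
    intro z
    have hfz : f z ^ p = (f z ^ q) ^ s := by rw [← Real.rpow_mul (hf0 z), hqs]
    have hgz : g z ^ p = (g z ^ q) ^ s := by rw [← Real.rpow_mul (hg0 z), hqs]
    have h1 : (f z ^ q) ^ s ≤ (C * (a z * (f z ^ q + g z ^ q))) ^ s :=
      Real.rpow_le_rpow (Real.rpow_nonneg (hf0 z) q)
        (le_trans (le_add_of_nonneg_right (Real.rpow_nonneg (hg0 z) q)) (hCψ z)) hs0.le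
    have h2 : (g z ^ q) ^ s ≤ (C * (a z * (f z ^ q + g z ^ q))) ^ s :=
      Real.rpow_le_rpow (Real.rpow_nonneg (hg0 z) q)
        (le_trans (le_add_of_nonneg_left (Real.rpow_nonneg (hf0 z) q)) (hCψ z)) hs0.le
    have hmul : (C * (a z * (f z ^ q + g z ^ q))) ^ s
        = C ^ s * (a z * (f z ^ q + g z ^ q)) ^ s := Real.mul_rpow hC0.le (hψ0 z)
    rw [hmul] at h1 h2
    linarith [hfz, hgz]
  -- integrability of the s-power
  have hψs_meas : AEStronglyMeasurable (fun z => (a z * (f z ^ q + g z ^ q)) ^ s) μ :=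
    (Real.continuous_rpow_const hs0.le).comp_aestronglyMeasurable hint2.aestronglyMeasurable
  have hψs_int : Integrable (fun z => (a z * (f z ^ q + g z ^ q)) ^ s) μ := by
    refine Integrable.mono' ((integrable_const (1:ℝ)).add hint2) hψs_meas ?_
    filter_upwards with z
    rw [Real.norm_eq_abs, abs_of_nonneg (Real.rpow_nonneg (hψ0 z) s)]
    rcases le_total (a z * (f z ^ q + g z ^ q)) 1 with h | h
    · have h1 := Real.rpow_le_one (hψ0 z) h hs0.le
      have h2 := hψ0 z
      simp only [Pi.add_apply]
      linarith
    · have h1 : (a z * (f z ^ q + g z ^ q)) ^ s ≤ (a z * (f z ^ q + g z ^ q)) ^ (1:ℝ) :=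
        Real.rpow_le_rpow_of_exponent_le h hs1.le
      rw [Real.rpow_one] at h1
      simp only [Pi.add_apply]
      linarith
  -- Jensen
  have jensen : (∫ z, (a z * (f z ^ q + g z ^ q)) ^ s ∂μ) / (μ Set.univ).toReal
      ≤ ((∫ z, a z * (f z ^ q + g z ^ q) ∂μ) / (μ Set.univ).toReal) ^ s := by
    have hcc : ConcaveOn ℝ (Set.Ici 0) (fun x : ℝ => x ^ s) :=
      Real.concaveOn_rpow hs0.le hs1.le
    have hcont : ContinuousOn (fun x : ℝ => x ^ s) (Set.Ici 0) :=
      (Real.continuous_rpow_const hs0.le).continuousOn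
    have hmem : ∀ᵐ z ∂μ, a z * (f z ^ q + g z ^ q) ∈ Set.Ici (0:ℝ) :=
      ae_of_all _ fun z => hψ0 z
    have H := hcc.le_map_average hcont isClosed_Ici hmem hint2 hψs_int
    simp only [average_eq, smul_eq_mul] at H
    rw [div_eq_inv_mul, div_eq_inv_mul]
    exact H
  -- integral monotonicity
  have hmono : (∫ z, (f z ^ p + g z ^ p) ∂μ)
      ≤ 2 * C ^ s * ∫ z, (a z * (f z ^ q + g z ^ q)) ^ s ∂μ := by
    have h1 := integral_mono hint1 (hψs_int.const_mul (2 * C ^ s)) (fun z => hpoint z)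
    rwa [integral_const_mul] at h1
  rw [integral_add hint1 hint2, add_div] at hbound
  set A := (∫ z, (f z ^ p + g z ^ p) ∂μ) / (μ Set.univ).toReal with hAdef
  set B := (∫ z, a z * (f z ^ q + g z ^ q) ∂μ) / (μ Set.univ).toReal with hBdef
  have hB0 : 0 ≤ B := div_nonneg (integral_nonneg fun z => hψ0 z) hM0.le
  have key : A ≤ 2 * C ^ s * B ^ s := by
    have h1 : A ≤ 2 * C ^ s
        * ((∫ z, (a z * (f z ^ q + g z ^ q)) ^ s ∂μ) / (μ Set.univ).toReal) := by
      rw [hAdef, ← mul_div_assoc]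
      exact (div_le_div_iff_of_pos_right hM0).2 hmono
    exact le_trans h1 (mul_le_mul_of_nonneg_left jensen (by positivity))
  by_contra hcon
  push_neg at hcon
  set K : ℝ := 1 + 2 ^ (1 + r) * c_a with hKdef
  have h2r : (2:ℝ) ^ (1 + r) = 2 * 2 ^ r := by
    rw [Real.rpow_add (by norm_num : (0:ℝ) < 2), Real.rpow_one]
  have hK0 : 0 < K := by positivity
  have hK1 : (1:ℝ) ≤ K := by
    have : (0:ℝ) < 2 ^ (1 + r) * c_a := by positivity
    linarith
  have hlamp : 0 < lam ^ p := Real.rpow_pos_of_pos hlam0 p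
  have hlamq : 0 < lam ^ q := Real.rpow_pos_of_pos hlam0 q
  have hKs1 : (1:ℝ) ≤ K ^ s := by
    have h := Real.rpow_le_rpow zero_le_one hK1 hs0.le
    rwa [Real.one_rpow] at h
  have hBs : K ^ s * lam ^ p / (2 * C ^ s) < B ^ s := by
    rw [div_lt_iff₀ (by positivity)]
    nlinarith [lt_of_lt_of_le hcon key]
  have hBlow : K * lam ^ q / ((2:ℝ) ^ r * C) < B := by
    have h3 := Real.rpow_lt_rpow (by positivity) hBs hr0
    have hL : (K ^ s * lam ^ p / (2 * C ^ s)) ^ r = K * lam ^ q / ((2:ℝ) ^ r * C) := by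
      rw [Real.div_rpow (by positivity) (by positivity),
        Real.mul_rpow (by positivity) hlamp.le,
        Real.mul_rpow (by norm_num) (by positivity),
        ← Real.rpow_mul hK0.le, hsr, Real.rpow_one,
        ← Real.rpow_mul hlam0.le, hpr,
        ← Real.rpow_mul hC0.le, hsr, Real.rpow_one]
    have hBr : (B ^ s) ^ r = B := by rw [← Real.rpow_mul hB0, hsr, Real.rpow_one]
    rwa [hL, hBr] at h3
  have hKC : a₀ * lam ^ q ≤ K * lam ^ q / ((2:ℝ) ^ r * C) := by
    rw [le_div_iff₀ (by positivity)]
    have h1 : a₀ * lam ^ q * ((2:ℝ) ^ r * C) = 2 * 2 ^ r * c_a * lam ^ q := by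
      rw [hCdef]; field_simp
    have h2 : K * lam ^ q = lam ^ q + 2 * 2 ^ r * c_a * lam ^ q := by
      rw [hKdef, h2r]; ring
    linarith
  have hA1 : lam ^ p ≤ K ^ s * lam ^ p := le_mul_of_one_le_left hlamp.le hKs1
  linarith
end

section
/- Let p ≥ 2, q > p, c_a ≥ 1, and let C = 2(1 + c_a + M) with M ≥ 10·c_a. Let λ_w, λ_v ≥ 1 and a_w, a_v ≥ 0 satisfy λ_w^p + a_w·λ_w^q = λ_v^p + a_v·λ_v^q = Λ > 0 and a_v/(2c_a) < a_w < 2c_a·a_v. If λ_w > C^{1/p}·λ_v, then we reach a contradiction; consequently λ_w ≤ C^{1/p}·λ_v and, symmetrically, λ_v ≤ C^{1/p}·λ_w. -/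
lemma stmt4_aux (p q c_a M C lw lv aw av Λ : ℝ)
    (hp : 2 ≤ p) (hq : p < q) (hca : 1 ≤ c_a) (hM : 10 * c_a ≤ M)
    (hC : C = 2 * (1 + c_a + M))
    (hlw : 1 ≤ lw) (hlv : 1 ≤ lv) (haw : 0 ≤ aw) (hav : 0 ≤ av)
    (hΛw : lw ^ p + aw * lw ^ q = Λ)
    (hΛv : lv ^ p + av * lv ^ q = Λ)
    (hcomp : av / (2 * c_a) < aw) :
    lw ≤ C ^ ((1:ℝ)/p) * lv := by
  by_contra h
  push_neg at h
  have hppos : 0 < p := by linarith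
  have hqpos : 0 < q := by linarith
  have hcapos : 0 < c_a := by linarith
  have hC1 : 1 < C := by nlinarith
  have hCpos : 0 < C := by linarith
  have hC2 : 2 * c_a ≤ C := by nlinarith
  have hlvpos : 0 < lv := by linarith
  have hlwpos : 0 < lw := by linarith
  have hcomp' : av < aw * (2 * c_a) := (div_lt_iff₀ (by linarith)).mp hcomp
  -- step1 : C * lv^p < lw^p
  have hCp : (C ^ ((1:ℝ)/p)) ^ p = C := by
    rw [← Real.rpow_mul hCpos.le, one_div_mul_cancel hppos.ne', Real.rpow_one]
  have step1 : C * lv ^ p < lw ^ p := by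
    have h' := Real.rpow_lt_rpow (by positivity) h hppos
    rwa [Real.mul_rpow (by positivity) hlvpos.le, hCp] at h'
  -- step2 : C * lv^q < lw^q
  have step2 : C * lv ^ q < lw ^ q := by
    have h' := Real.rpow_lt_rpow (by positivity) h hqpos
    rw [Real.mul_rpow (by positivity) hlvpos.le, ← Real.rpow_mul hCpos.le] at h'
    have hexp : (1:ℝ) ≤ 1/p * q := by
      rw [div_mul_eq_mul_div, one_mul, le_div_iff₀ hppos]
      linarith
    have : C ^ (1:ℝ) ≤ C ^ (1/p * q) := Real.rpow_le_rpow_of_exponent_le hC1.le hexp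
    rw [Real.rpow_one] at this
    have hlvq : 0 < lv ^ q := Real.rpow_pos_of_pos hlvpos q
    nlinarith
  have hlvp : 0 < lv ^ p := Real.rpow_pos_of_pos hlvpos p
  have hlvq : 0 < lv ^ q := Real.rpow_pos_of_pos hlvpos q
  have key1 : aw * (C * lv ^ q) ≤ aw * lw ^ q := mul_le_mul_of_nonneg_left step2.le haw
  have h1 : C * lv ^ p + aw * (C * lv ^ q) < Λ := by rw [← hΛw]; linarith
  have hawC : av ≤ aw * C := by nlinarith
  have h2 : Λ ≤ C * lv ^ p + aw * (C * lv ^ q) := by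
    rw [← hΛv]
    have t1 : lv ^ p ≤ C * lv ^ p := by nlinarith
    have t2 : av * lv ^ q ≤ aw * C * lv ^ q := mul_le_mul_of_nonneg_right hawC hlvq.le
    nlinarith
  linarith

/-- Comparability of intrinsic scaling factors: if `λ_w^p + a_w λ_w^q = λ_v^p + a_v λ_v^q = Λ`
and the coefficient values `a_w, a_v` are comparable up to factor `2 c_a`, then
`λ_w ≤ C^{1/p} λ_v` and `λ_v ≤ C^{1/p} λ_w` for `C = 2(1 + c_a + M)`, `M ≥ 10 c_a`. -/
theorem stmt4 (p q c_a M C lam_w lam_v a_w a_v Λ : ℝ)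
    (hp : 2 ≤ p) (hq : p < q) (hca : 1 ≤ c_a) (hM : 10 * c_a ≤ M)
    (hC : C = 2 * (1 + c_a + M))
    (hlw : 1 ≤ lam_w) (hlv : 1 ≤ lam_v) (haw : 0 ≤ a_w) (hav : 0 ≤ a_v)
    (hΛw : lam_w ^ p + a_w * lam_w ^ q = Λ)
    (hΛv : lam_v ^ p + a_v * lam_v ^ q = Λ) (hΛ : 0 < Λ)
    (hcomp1 : a_v / (2 * c_a) < a_w) (hcomp2 : a_w < 2 * c_a * a_v) :
    lam_w ≤ C ^ ((1:ℝ)/p) * lam_v ∧ lam_v ≤ C ^ ((1:ℝ)/p) * lam_w := by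
  have hcomp2' : a_w / (2 * c_a) < a_v := by
    rw [div_lt_iff₀ (by linarith)]
    linarith [hcomp2]
  exact ⟨stmt4_aux p q c_a M C lam_w lam_v a_w a_v Λ hp hq hca hM hC hlw hlv haw hav hΛw hΛv hcomp1,
    stmt4_aux p q c_a M C lam_v lam_w a_v a_w Λ hp hq hca hM hC hlv hlw hav haw hΛv hΛw hcomp2'⟩
end
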